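/- arXiv:1403.2249 — 7 statements merged into one kernel-verified Lean document; each statement's English description precedes it below -/
import Mathlib

section
/- Let r > 1, 0 < θ < π/2, r·cos θ < 1, and h > r/√(r² − 1). Then h·sin θ / √((1 − r²cos²θ)h² + r²cos²θ) ≥ 1, and arcosh( h·sin θ / √((1 − r²cos²θ)h² + r²cos²θ) ) = log( (h·sin θ + √((r² − 1)h² − r²)·cos θ) / √((1 − r²cos²θ)h² + r²cos²θ) ). -/
open Real

/-- The inverse hyperbolic cosine on `[1, ∞)`, given by `arcosh x = log (x + √(x² − 1))`. -/
noncomputable def arcosh (x : ℝ) : ℝ := Real.log (x + Real.sqrt (x ^ 2 - 1))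

theorem arcosh_lambert_cube_edge_length (r θ h : ℝ) (hr : 1 < r) (hθ0 : 0 < θ)
    (hθ1 : θ < π / 2) (hrθ : r * Real.cos θ < 1) (hh : r / Real.sqrt (r ^ 2 - 1) < h) :
    1 ≤ h * Real.sin θ /
        Real.sqrt ((1 - r ^ 2 * Real.cos θ ^ 2) * h ^ 2 + r ^ 2 * Real.cos θ ^ 2) ∧
      _root_.arcosh (h * Real.sin θ /
          Real.sqrt ((1 - r ^ 2 * Real.cos θ ^ 2) * h ^ 2 + r ^ 2 * Real.cos θ ^ 2)) =
        Real.log ((h * Real.sin θ + Real.sqrt ((r ^ 2 - 1) * h ^ 2 - r ^ 2) * Real.cos θ) /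
          Real.sqrt ((1 - r ^ 2 * Real.cos θ ^ 2) * h ^ 2 + r ^ 2 * Real.cos θ ^ 2)) := by
  have hπ : 0 < π := Real.pi_pos
  have hc : 0 < Real.cos θ :=
    Real.cos_pos_of_mem_Ioo ⟨by linarith, hθ1⟩
  have hs : 0 < Real.sin θ :=
    Real.sin_pos_of_pos_of_lt_pi hθ0 (by linarith)
  have hr1 : 0 < r ^ 2 - 1 := by nlinarith
  have hsq : 0 < Real.sqrt (r ^ 2 - 1) := Real.sqrt_pos.2 hr1
  have h0 : 0 < h := lt_trans (div_pos (by linarith) hsq) hh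
  have hrlt : r < h * Real.sqrt (r ^ 2 - 1) := (div_lt_iff₀ hsq).1 hh
  have hsqsq : Real.sqrt (r ^ 2 - 1) ^ 2 = r ^ 2 - 1 := Real.sq_sqrt hr1.le
  have hE : 0 < (r ^ 2 - 1) * h ^ 2 - r ^ 2 := by nlinarith
  set D : ℝ := (1 - r ^ 2 * Real.cos θ ^ 2) * h ^ 2 + r ^ 2 * Real.cos θ ^ 2 with hDdef
  have h1c : 0 < 1 - r ^ 2 * Real.cos θ ^ 2 := by nlinarith [mul_pos (lt_trans zero_lt_one hr) hc]
  have hD : 0 < D := by positivity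
  have hsD : 0 < Real.sqrt D := Real.sqrt_pos.2 hD
  have hpyth := Real.sin_sq_add_cos_sq θ
  have hDle : D ≤ (h * Real.sin θ) ^ 2 := by nlinarith [sq_nonneg (Real.cos θ)]
  have h1 : 1 ≤ h * Real.sin θ / Real.sqrt D := by
    rw [le_div_iff₀ hsD, one_mul]
    calc Real.sqrt D ≤ Real.sqrt ((h * Real.sin θ) ^ 2) := Real.sqrt_le_sqrt hDle
      _ = h * Real.sin θ := Real.sqrt_sq (by positivity)
  refine ⟨h1, ?_⟩
  unfold _root_.arcosh
  congr 1
  have hx2 : (h * Real.sin θ / Real.sqrt D) ^ 2 - 1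
      = Real.cos θ ^ 2 * ((r ^ 2 - 1) * h ^ 2 - r ^ 2) / D := by
    rw [div_pow, Real.sq_sqrt hD.le]
    field_simp
    nlinarith [hpyth]
  rw [hx2]
  have : Real.sqrt (Real.cos θ ^ 2 * ((r ^ 2 - 1) * h ^ 2 - r ^ 2) / D)
      = Real.sqrt ((r ^ 2 - 1) * h ^ 2 - r ^ 2) * Real.cos θ / Real.sqrt D := by
    rw [Real.sqrt_div (by positivity), Real.sqrt_mul (by positivity), Real.sqrt_sq hc.le]
    ring
  rw [this, ← add_div]
end

section
/- Let r > 0 and C ∈ ℝ, and define F(h) = log( (√((1 − r²)h² + r²) + 1) / √(h² − 1) ) − C·√((1 − r²)h² + r²). Then for every h > 1 with (1 − r²)h² + r² > 0, F has derivative at h equal to −h / ( (h² − 1)·√((1 − r²)h² + r²) ) · G(h), where G(h) = C(1 − r²)(h² − 1) + 1. -/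
theorem hasDerivAt_F (r C h : ℝ) (hr : 0 < r) (hh : 1 < h)
    (hpos : (1 - r ^ 2) * h ^ 2 + r ^ 2 > 0) :
    HasDerivAt
      (fun t : ℝ => Real.log ((Real.sqrt ((1 - r ^ 2) * t ^ 2 + r ^ 2) + 1) /
          Real.sqrt (t ^ 2 - 1)) -
        C * Real.sqrt ((1 - r ^ 2) * t ^ 2 + r ^ 2))
      (-h / ((h ^ 2 - 1) * Real.sqrt ((1 - r ^ 2) * h ^ 2 + r ^ 2)) *
        (C * (1 - r ^ 2) * (h ^ 2 - 1) + 1)) h := by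
  set s := Real.sqrt ((1 - r ^ 2) * h ^ 2 + r ^ 2) with hs_def
  have hs : 0 < s := Real.sqrt_pos.mpr hpos
  have hs2 : s ^ 2 = (1 - r ^ 2) * h ^ 2 + r ^ 2 := Real.sq_sqrt hpos.le
  have hu2pos : (0:ℝ) < h ^ 2 - 1 := by nlinarith
  set u := Real.sqrt (h ^ 2 - 1) with hu_def
  have hu : 0 < u := Real.sqrt_pos.mpr hu2pos
  have hu2 : u ^ 2 = h ^ 2 - 1 := Real.sq_sqrt hu2pos.le
  have h1 : HasDerivAt (fun t : ℝ => (1 - r ^ 2) * t ^ 2 + r ^ 2)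
      ((1 - r ^ 2) * (2 * h)) h := by
    simpa [mul_comm, mul_assoc] using
      (((hasDerivAt_pow 2 h).const_mul (1 - r ^ 2)).add_const (r ^ 2))
  have hsd : HasDerivAt (fun t : ℝ => Real.sqrt ((1 - r ^ 2) * t ^ 2 + r ^ 2))
      ((1 - r ^ 2) * (2 * h) / (2 * s)) h := h1.sqrt hpos.ne'
  have h2 : HasDerivAt (fun t : ℝ => t ^ 2 - 1) (2 * h) h := by
    simpa using (hasDerivAt_pow 2 h).sub_const 1
  have hud : HasDerivAt (fun t : ℝ => Real.sqrt (t ^ 2 - 1)) (2 * h / (2 * u)) h :=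
    h2.sqrt hu2pos.ne'
  have hq : HasDerivAt (fun t : ℝ => (Real.sqrt ((1 - r ^ 2) * t ^ 2 + r ^ 2) + 1) /
      Real.sqrt (t ^ 2 - 1))
      ((((1 - r ^ 2) * (2 * h) / (2 * s)) * u - (s + 1) * (2 * h / (2 * u))) / u ^ 2) h := by
    exact (hsd.add_const 1).div hud hu.ne'
  have hqne : (s + 1) / u ≠ 0 := by positivity
  have hlog := hq.log hqne
  have hfinal := hlog.sub (hsd.const_mul C)
  refine hfinal.congr_deriv (Eq.symm ?_)
  have hs1 : s + 1 ≠ 0 := by positivity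
  have key : s ^ 2 = (1 - r ^ 2) * u ^ 2 + 1 := by
    rw [hs2, hu2]; ring
  rw [← hs_def, ← hu_def, ← hu2]
  field_simp
  linear_combination key
end

section
/- Let 0 < r < 1 and C > 0, and define F(h) = log( (√((1 − r²)h² + r²) + 1) / √(h² − 1) ) − C·√((1 − r²)h² + r²). Then F is strictly decreasing on the interval (1, ∞). -/
set_option maxHeartbeats 1000000


theorem F_strictAntiOn (r C : ℝ) (hr0 : 0 < r) (hr1 : r < 1) (hC : 0 < C) :
    StrictAntiOn
      (fun h : ℝ => Real.log ((Real.sqrt ((1 - r ^ 2) * h ^ 2 + r ^ 2) + 1) /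
          Real.sqrt (h ^ 2 - 1)) -
        C * Real.sqrt ((1 - r ^ 2) * h ^ 2 + r ^ 2))
      (Set.Ioi 1) := by
  intro a ha b hb hab
  simp only [Set.mem_Ioi] at ha hb
  have h1r : 0 < 1 - r ^ 2 := by nlinarith
  have ha2 : (0:ℝ) < a ^ 2 - 1 := by nlinarith
  have hb2 : (0:ℝ) < b ^ 2 - 1 := by nlinarith
  have hba2 : (0:ℝ) < b ^ 2 - a ^ 2 := by nlinarith
  set sa := Real.sqrt ((1 - r ^ 2) * a ^ 2 + r ^ 2) with hsa
  set sb := Real.sqrt ((1 - r ^ 2) * b ^ 2 + r ^ 2) with hsb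
  have hsa2 : sa ^ 2 = (1 - r ^ 2) * a ^ 2 + r ^ 2 := Real.sq_sqrt (by nlinarith)
  have hsb2 : sb ^ 2 = (1 - r ^ 2) * b ^ 2 + r ^ 2 := Real.sq_sqrt (by nlinarith)
  have hsa0 : 0 ≤ sa := Real.sqrt_nonneg _
  have hsb0 : 0 ≤ sb := Real.sqrt_nonneg _
  have hsa1 : 1 < sa := by
    nlinarith [hsa2, hsa0, mul_pos h1r ha2]
  have hsb1 : 1 < sb := by
    nlinarith [hsb2, hsb0, mul_pos h1r hb2]
  have hab' : sa < sb := by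
    apply Real.sqrt_lt_sqrt (by nlinarith)
    nlinarith [mul_pos h1r hba2]
  set ta := Real.sqrt (sa ^ 2 - 1) with hta
  set tb := Real.sqrt (sb ^ 2 - 1) with htb
  have hta2 : ta ^ 2 = sa ^ 2 - 1 := Real.sq_sqrt (by nlinarith)
  have htb2 : tb ^ 2 = sb ^ 2 - 1 := Real.sq_sqrt (by nlinarith)
  have hta0 : 0 < ta := Real.sqrt_pos.mpr (by nlinarith)
  have htb0 : 0 < tb := Real.sqrt_pos.mpr (by nlinarith)
  have hr1r : 0 < Real.sqrt (1 - r ^ 2) := Real.sqrt_pos.mpr h1r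
  have sqa : ta = Real.sqrt (1 - r ^ 2) * Real.sqrt (a ^ 2 - 1) := by
    rw [hta, ← Real.sqrt_mul h1r.le]
    congr 1
    linear_combination hsa2
  have sqb : tb = Real.sqrt (1 - r ^ 2) * Real.sqrt (b ^ 2 - 1) := by
    rw [htb, ← Real.sqrt_mul h1r.le]
    congr 1
    linear_combination hsb2
  clear_value ta tb
  clear_value sa sb
  have hA : Real.sqrt (a ^ 2 - 1) = ta / Real.sqrt (1 - r ^ 2) := by
    rw [sqa]; field_simp
  have hB : Real.sqrt (b ^ 2 - 1) = tb / Real.sqrt (1 - r ^ 2) := by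
    rw [sqb]; field_simp
  -- key squared inequality
  have hsq : ((sb + 1) * ta) ^ 2 ≤ ((sa + 1) * tb) ^ 2 := by
    have hk : 0 < (sa + 1) * (sb + 1) * (sb - sa) :=
      mul_pos (mul_pos (by linarith) (by linarith)) (by linarith)
    have e1 : ((sb + 1) * ta) ^ 2 = (sb + 1) ^ 2 * (sa ^ 2 - 1) := by
      rw [mul_pow, hta2]
    have e2 : ((sa + 1) * tb) ^ 2 = (sa + 1) ^ 2 * (sb ^ 2 - 1) := by
      rw [mul_pow, htb2]
    rw [e1, e2]
    nlinarith [hk]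
  have hkey : (sb + 1) * ta ≤ (sa + 1) * tb := by
    have h1 : 0 ≤ (sb + 1) * ta := by positivity
    have h2 : 0 ≤ (sa + 1) * tb := by positivity
    nlinarith [hsq]
  have hdiv : (sb + 1) / Real.sqrt (b ^ 2 - 1) ≤ (sa + 1) / Real.sqrt (a ^ 2 - 1) := by
    rw [hA, hB, div_div_eq_mul_div, div_div_eq_mul_div]
    rw [div_le_div_iff₀ htb0 hta0]
    nlinarith [mul_le_mul_of_nonneg_right hkey hr1r.le]
  have hposb : 0 < (sb + 1) / Real.sqrt (b ^ 2 - 1) := by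
    rw [hB]; positivity
  have hlog : Real.log ((sb + 1) / Real.sqrt (b ^ 2 - 1)) ≤
      Real.log ((sa + 1) / Real.sqrt (a ^ 2 - 1)) := Real.log_le_log hposb hdiv
  have hCs : C * sa < C * sb := by nlinarith
  simp only
  rw [← hsa, ← hsb]
  linarith
end

section
/- Let r > 1, 0 < θ < π/2 with r·cos θ < 1, and h > r/√(r² − 1). Then h·sin θ + √((r² − 1)h² − r²)·cos θ > √( (1 − r²cos²θ)h² + r²cos²θ ). -/
open Real

theorem lambert_cube_edge_length_pos (r θ h : ℝ) (hr : 1 < r) (hθ0 : 0 < θ)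
    (hθ1 : θ < π / 2) (hrθ : r * Real.cos θ < 1) (hh : r / Real.sqrt (r ^ 2 - 1) < h) :
    Real.sqrt ((1 - r ^ 2 * Real.cos θ ^ 2) * h ^ 2 + r ^ 2 * Real.cos θ ^ 2) <
      h * Real.sin θ + Real.sqrt ((r ^ 2 - 1) * h ^ 2 - r ^ 2) * Real.cos θ := by
  have hr1 : (0:ℝ) < r ^ 2 - 1 := by nlinarith
  have hs1 : Real.sqrt (r ^ 2 - 1) > 0 := Real.sqrt_pos.mpr hr1
  have hsq : Real.sqrt (r ^ 2 - 1) ^ 2 = r ^ 2 - 1 := Real.sq_sqrt hr1.le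
  have hhpos : 0 < h := lt_trans (div_pos (by linarith) hs1) hh
  have hA : 0 < (r ^ 2 - 1) * h ^ 2 - r ^ 2 := by
    have h1 : r / Real.sqrt (r ^ 2 - 1) < h := hh
    have h2 : r < h * Real.sqrt (r ^ 2 - 1) := by
      rwa [div_lt_iff₀ hs1] at h1
    nlinarith [sq_nonneg (h * Real.sqrt (r ^ 2 - 1) - r)]
  have hAsq : Real.sqrt ((r ^ 2 - 1) * h ^ 2 - r ^ 2) ^ 2 = (r ^ 2 - 1) * h ^ 2 - r ^ 2 :=
    Real.sq_sqrt hA.le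
  have hApos : 0 < Real.sqrt ((r ^ 2 - 1) * h ^ 2 - r ^ 2) := Real.sqrt_pos.mpr hA
  have hc : 0 < Real.cos θ := Real.cos_pos_of_mem_Ioo ⟨by linarith [Real.pi_pos], hθ1⟩
  have hsin : 0 < Real.sin θ := Real.sin_pos_of_pos_of_lt_pi hθ0 (by
    have := Real.pi_pos; linarith)
  have hpyth : Real.sin θ ^ 2 + Real.cos θ ^ 2 = 1 := Real.sin_sq_add_cos_sq θ
  have hrhs : 0 < h * Real.sin θ + Real.sqrt ((r ^ 2 - 1) * h ^ 2 - r ^ 2) * Real.cos θ := by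
    positivity
  rw [show Real.sqrt ((1 - r ^ 2 * Real.cos θ ^ 2) * h ^ 2 + r ^ 2 * Real.cos θ ^ 2) <
      h * Real.sin θ + Real.sqrt ((r ^ 2 - 1) * h ^ 2 - r ^ 2) * Real.cos θ ↔
      (1 - r ^ 2 * Real.cos θ ^ 2) * h ^ 2 + r ^ 2 * Real.cos θ ^ 2 <
      (h * Real.sin θ + Real.sqrt ((r ^ 2 - 1) * h ^ 2 - r ^ 2) * Real.cos θ) ^ 2 from
      Real.sqrt_lt' hrhs]
  nlinarith [mul_pos (mul_pos (mul_pos hhpos hsin) hc) hApos,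
    mul_pos hA (mul_pos hc hc)]
end

section
/- Let r > 1 and C > 0, and define F(h) = log( (√((1 − r²)h² + r²) + 1) / √(h² − 1) ) − C·√((1 − r²)h² + r²). Then the set { h ∈ (1, r/√(r² − 1)) : F(h) = (1/2)·log(r² − 1) } contains at most one element. -/
private lemma gderiv (C t : ℝ) (h1 : -1 < t) (h2 : t < 1) :
    HasDerivAt (fun s : ℝ => 1/2 * (Real.log (1 + s) - Real.log (1 - s)) - C * s)
      (1/2 * (1/(1+t) + 1/(1-t)) - C) t := by
  have ht1 : (0:ℝ) < 1 + t := by linarith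
  have ht2 : (0:ℝ) < 1 - t := by linarith
  have d1 : HasDerivAt (fun s : ℝ => Real.log (1 + s)) (1/(1+t)) t := by
    have := ((hasDerivAt_id t).const_add 1).log ht1.ne'
    simpa using this
  have d2 : HasDerivAt (fun s : ℝ => Real.log (1 - s)) (-1/(1-t)) t := by
    have := ((hasDerivAt_id t).const_sub 1).log ht2.ne'
    simpa using this
  have d3 := ((d1.sub d2).const_mul (1/2 : ℝ)).sub ((hasDerivAt_id t).const_mul C)
  refine HasDerivAt.congr_deriv d3 ?_
  ring

private lemma gconv (C : ℝ) :
    StrictConvexOn ℝ (Set.Ico (0:ℝ) 1)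
      (fun s : ℝ => 1/2 * (Real.log (1 + s) - Real.log (1 - s)) - C * s) := by
  apply StrictMonoOn.strictConvexOn_of_deriv (convex_Ico 0 1)
  · intro t ht
    exact (gderiv C t (by linarith [ht.1]) ht.2).continuousAt.continuousWithinAt
  · rw [interior_Ico]
    intro x hx y hy hxy
    rw [(gderiv C x (by linarith [hx.1]) hx.2).deriv,
        (gderiv C y (by linarith [hy.1]) hy.2).deriv]
    have hx1 : (0:ℝ) < 1 + x := by linarith [hx.1]
    have hx2 : (0:ℝ) < 1 - x := by linarith [hx.2]
    have hy1 : (0:ℝ) < 1 + y := by linarith [hy.1]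
    have hy2 : (0:ℝ) < 1 - y := by linarith [hy.2]
    have e1 : 1/(1+x) + 1/(1-x) = 2/((1+x)*(1-x)) := by field_simp; ring
    have e2 : 1/(1+y) + 1/(1-y) = 2/((1+y)*(1-y)) := by field_simp; ring
    rw [e1, e2]
    have hlt : (1+y)*(1-y) < (1+x)*(1-x) := by nlinarith [hx.1, hy.1]
    have := div_lt_div_of_pos_left (by norm_num : (0:ℝ) < 2) (by positivity) hlt
    linarith

private lemma g_unique (C a b : ℝ) (ha : a ∈ Set.Ioo (0:ℝ) 1) (hb : b ∈ Set.Ioo (0:ℝ) 1)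
    (hga : 1/2 * (Real.log (1 + a) - Real.log (1 - a)) - C * a = 0)
    (hgb : 1/2 * (Real.log (1 + b) - Real.log (1 - b)) - C * b = 0)
    (hab : a < b) : False := by
  have conv := gconv C
  have h0mem : (0:ℝ) ∈ Set.Ico (0:ℝ) 1 := ⟨le_refl 0, one_pos⟩
  have hbmem : b ∈ Set.Ico (0:ℝ) 1 := ⟨hb.1.le, hb.2⟩
  have hca : 0 < 1 - a / b := by
    have : a / b < 1 := (div_lt_one hb.1).2 hab
    linarith
  have hcb : 0 < a / b := div_pos ha.1 hb.1
  have key := conv.2 h0mem hbmem hb.1.ne hca hcb (by ring)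
  simp only [smul_eq_mul, mul_zero, zero_add] at key
  rw [div_mul_cancel₀ a hb.1.ne'] at key
  rw [hga, hgb] at key
  simp [Real.log_one] at key

private lemma reduce (r C h : ℝ) (hr : 1 < r)
    (hh : h ∈ Set.Ioo (1 : ℝ) (r / Real.sqrt (r ^ 2 - 1)))
    (heq : Real.log ((Real.sqrt ((1 - r ^ 2) * h ^ 2 + r ^ 2) + 1) / Real.sqrt (h ^ 2 - 1)) -
        C * Real.sqrt ((1 - r ^ 2) * h ^ 2 + r ^ 2) =
        (1 / 2) * Real.log (r ^ 2 - 1)) :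
    Real.sqrt ((1 - r ^ 2) * h ^ 2 + r ^ 2) ∈ Set.Ioo (0:ℝ) 1 ∧
    1/2 * (Real.log (1 + Real.sqrt ((1 - r ^ 2) * h ^ 2 + r ^ 2))
        - Real.log (1 - Real.sqrt ((1 - r ^ 2) * h ^ 2 + r ^ 2)))
      - C * Real.sqrt ((1 - r ^ 2) * h ^ 2 + r ^ 2) = 0 := by
  set t := Real.sqrt ((1 - r ^ 2) * h ^ 2 + r ^ 2) with ht_def
  have hr1 : (0:ℝ) < r ^ 2 - 1 := by nlinarith
  have hs : 0 < Real.sqrt (r ^ 2 - 1) := Real.sqrt_pos.2 hr1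
  have hsq : (Real.sqrt (r ^ 2 - 1)) ^ 2 = r ^ 2 - 1 := Real.sq_sqrt hr1.le
  have hhpos : 0 < h := lt_trans one_pos hh.1
  have hmul : h * Real.sqrt (r ^ 2 - 1) < r := (lt_div_iff₀ hs).1 hh.2
  have hss : (h * Real.sqrt (r ^ 2 - 1)) ^ 2 = h ^ 2 * (r ^ 2 - 1) := by
    rw [mul_pow, hsq]
  have h0 : 0 < h * Real.sqrt (r ^ 2 - 1) := mul_pos hhpos hs
  have hX : (h * Real.sqrt (r ^ 2 - 1)) ^ 2 < r ^ 2 := by nlinarith [hmul, h0]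
  have hpos : 0 < (1 - r ^ 2) * h ^ 2 + r ^ 2 := by nlinarith [hX, hss]
  have ht2 : t ^ 2 = (1 - r ^ 2) * h ^ 2 + r ^ 2 := Real.sq_sqrt hpos.le
  have htpos : 0 < t := Real.sqrt_pos.2 hpos
  have hhsq : 1 < h ^ 2 := by nlinarith [hh.1]
  have ht2lt : t ^ 2 < 1 := by nlinarith [ht2, hhsq, hr1]
  have htlt : t < 1 := by nlinarith [ht2lt, htpos]
  have h1t : (0:ℝ) < 1 - t := by linarith
  have h1t' : (0:ℝ) < 1 + t := by linarith
  have hh1 : (0:ℝ) < h ^ 2 - 1 := by nlinarith [hh.1]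
  have hfactor : h ^ 2 - 1 = (1 - t) * (1 + t) / (r ^ 2 - 1) := by
    rw [eq_div_iff hr1.ne']
    nlinarith [ht2]
  have elog1 : Real.log ((t + 1) / Real.sqrt (h ^ 2 - 1))
      = Real.log (t + 1) - 1/2 * Real.log (h ^ 2 - 1) := by
    rw [Real.log_div (by linarith) (by positivity), Real.log_sqrt hh1.le]
    ring
  have elog2 : Real.log (h ^ 2 - 1)
      = Real.log (1 - t) + Real.log (1 + t) - Real.log (r ^ 2 - 1) := by
    rw [hfactor, Real.log_div (mul_pos h1t h1t').ne' hr1.ne',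
        Real.log_mul h1t.ne' h1t'.ne']
  have e3 : Real.log (t + 1) = Real.log (1 + t) := by rw [add_comm]
  rw [elog1, elog2, e3] at heq
  exact ⟨⟨htpos, htlt⟩, by linarith⟩

theorem F_critical_subsingleton (r C : ℝ) (hr : 1 < r) (hC : 0 < C) :
    {h : ℝ | h ∈ Set.Ioo (1 : ℝ) (r / Real.sqrt (r ^ 2 - 1)) ∧
      Real.log ((Real.sqrt ((1 - r ^ 2) * h ^ 2 + r ^ 2) + 1) / Real.sqrt (h ^ 2 - 1)) -
        C * Real.sqrt ((1 - r ^ 2) * h ^ 2 + r ^ 2) =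
        (1 / 2) * Real.log (r ^ 2 - 1)}.Subsingleton := by
  intro h1 hm1 h2 hm2
  obtain ⟨hh1, heq1⟩ := hm1
  obtain ⟨hh2, heq2⟩ := hm2
  obtain ⟨ht1m, hg1⟩ := reduce r C h1 hr hh1 heq1
  obtain ⟨ht2m, hg2⟩ := reduce r C h2 hr hh2 heq2
  set t1 := Real.sqrt ((1 - r ^ 2) * h1 ^ 2 + r ^ 2) with ht1_def
  set t2 := Real.sqrt ((1 - r ^ 2) * h2 ^ 2 + r ^ 2) with ht2_def
  have ht : t1 = t2 := by
    rcases lt_trichotomy t1 t2 with h | h | h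
    · exact absurd (g_unique C t1 t2 ht1m ht2m hg1 hg2 h) not_false
    · exact h
    · exact absurd (g_unique C t2 t1 ht2m ht1m hg2 hg1 h) not_false
  have hr1 : (0:ℝ) < r ^ 2 - 1 := by nlinarith
  have hp1 : 0 < (1 - r ^ 2) * h1 ^ 2 + r ^ 2 := Real.sqrt_pos.1 (ht1_def ▸ ht1m.1)
  have hp2 : 0 < (1 - r ^ 2) * h2 ^ 2 + r ^ 2 := Real.sqrt_pos.1 (ht2_def ▸ ht2m.1)
  have hsq : (1 - r ^ 2) * h1 ^ 2 + r ^ 2 = (1 - r ^ 2) * h2 ^ 2 + r ^ 2 := by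
    have e1 : t1 ^ 2 = (1 - r ^ 2) * h1 ^ 2 + r ^ 2 := Real.sq_sqrt hp1.le
    have e2 : t2 ^ 2 = (1 - r ^ 2) * h2 ^ 2 + r ^ 2 := Real.sq_sqrt hp2.le
    rw [← e1, ← e2, ht]
  have hne : (1 - r ^ 2) ≠ 0 := by nlinarith
  have hsq2 : h1 ^ 2 = h2 ^ 2 := by
    have : (1 - r ^ 2) * h1 ^ 2 = (1 - r ^ 2) * h2 ^ 2 := by linarith
    exact mul_left_cancel₀ hne this
  have hpos1 : (0:ℝ) < h1 := lt_trans one_pos hh1.1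
  have hpos2 : (0:ℝ) < h2 := lt_trans one_pos hh2.1
  calc h1 = Real.sqrt (h1 ^ 2) := (Real.sqrt_sq hpos1.le).symm
    _ = Real.sqrt (h2 ^ 2) := by rw [hsq2]
    _ = h2 := Real.sqrt_sq hpos2.le
end

section
/- Let V : ℝ → ℝ be continuous on [0, ∞), strictly increasing on [0, 1] with V(1) > 0, differentiable on (1, ∞), suppose V(h) tends to 0 as h → +∞, suppose the derivative V′(h) tends to +∞ as h ↓ 1, and suppose the set { h ∈ (1, ∞) : V′(h) = 0 } contains at most one element. Then there exists a unique h* ∈ (1, ∞) such that V(h*) ≥ V(h) for all h ∈ [0, ∞), and V(h*) > V(h) for all h ∈ [0, ∞) with h ≠ h*. -/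
open Set Filter

theorem volume_unique_max (V V' : ℝ → ℝ)
    (hcont : ContinuousOn V (Set.Ici 0))
    (hmono : StrictMonoOn V (Set.Icc 0 1))
    (hV1 : 0 < V 1)
    (hderiv : ∀ h ∈ Set.Ioi (1 : ℝ), HasDerivAt V (V' h) h)
    (hlim0 : Filter.Tendsto V Filter.atTop (nhds 0))
    (hlim' : Filter.Tendsto V' (nhdsWithin 1 (Set.Ioi 1)) Filter.atTop)
    (hcrit : {h : ℝ | h ∈ Set.Ioi (1 : ℝ) ∧ V' h = 0}.Subsingleton) :
    ∃! hstar : ℝ, hstar ∈ Set.Ioi (1 : ℝ) ∧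
      (∀ h ∈ Set.Ici (0 : ℝ), V h ≤ V hstar) ∧
      (∀ h ∈ Set.Ici (0 : ℝ), h ≠ hstar → V h < V hstar) := by
  -- V' > 0 on a right neighborhood of 1
  obtain ⟨u, hu1, hu⟩ := mem_nhdsGT_iff_exists_Ioo_subset.mp
    (hlim'.eventually_gt_atTop 0)
  have hu1' : (1 : ℝ) < u := hu1
  set a : ℝ := (1 + u) / 2 with ha_def
  have ha1 : 1 < a := by simp only [ha_def]; linarith
  have hau : a < u := by simp only [ha_def]; linarith
  -- MVT gives V 1 < V a
  have hVa : V 1 < V a := by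
    obtain ⟨c, hc, hc'⟩ := exists_hasDerivAt_eq_slope V V' ha1
      (hcont.mono (fun x hx => le_trans zero_le_one hx.1))
      (fun x hx => hderiv x hx.1)
    have hpos : 0 < V' c := hu ⟨hc.1, lt_trans hc.2 hau⟩
    have hdiv : 0 < (V a - V 1) / (a - 1) := hc' ▸ hpos
    have h2 : 0 < V a - V 1 := by
      rcases div_pos_iff.mp hdiv with ⟨h, _⟩ | ⟨_, h⟩
      · exact h
      · linarith
    linarith
  -- beyond M, V < V 1
  obtain ⟨M0, hM0⟩ := eventually_atTop.mp (hlim0.eventually (eventually_lt_nhds hV1))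
  set M : ℝ := max M0 (a + 1) with hM_def
  have haM : a < M := lt_of_lt_of_le (by linarith) (le_max_right _ _)
  have hM : ∀ h, M ≤ h → V h < V 1 := fun h hh => hM0 h (le_trans (le_max_left _ _) hh)
  -- max on compact [1, M]
  obtain ⟨hs, hsmem, hsmax⟩ := (isCompact_Icc : IsCompact (Icc (1:ℝ) M)).exists_isMaxOn
    ⟨1, le_refl 1, by linarith⟩ (hcont.mono (fun x hx => le_trans zero_le_one hx.1))
  have hsmax' : ∀ x ∈ Icc (1:ℝ) M, V x ≤ V hs := fun x hx => hsmax hx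
  have hVs : V 1 < V hs := lt_of_lt_of_le hVa (hsmax' a ⟨le_of_lt ha1, le_of_lt haM⟩)
  have hs1 : 1 < hs := hsmem.1.lt_of_ne (fun h => absurd hVs (by rw [← h]; exact lt_irrefl _))
  have hsM : hs < M := hsmem.2.lt_of_ne (fun h => absurd hVs
    (by rw [h]; exact not_lt.mpr (le_of_lt (hM M (le_refl M)))))
  -- global max
  have hglob : ∀ h ∈ Ici (0:ℝ), V h ≤ V hs := by
    intro h hh
    rcases le_or_gt h 1 with h1 | h1
    · exact le_trans (hmono.monotoneOn ⟨hh, h1⟩ ⟨zero_le_one, le_refl 1⟩ h1) hVs.le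
    · rcases le_or_gt h M with h2 | h2
      · exact hsmax' h ⟨h1.le, h2⟩
      · exact le_trans (hM h h2.le).le hVs.le
  -- a global max in (1,∞) is a critical point
  have hloc : ∀ x ∈ Ioi (1:ℝ), (∀ h ∈ Ici (0:ℝ), V h ≤ V x) → V' x = 0 := by
    intro x hx hmax
    have hlm : IsLocalMax V x := by
      filter_upwards [Ici_mem_nhds (lt_trans zero_lt_one hx)] with y hy
      exact hmax y hy
    exact hlm.hasDerivAt_eq_zero (hderiv x hx)
  -- strict global max
  have hstrict : ∀ h ∈ Ici (0:ℝ), h ≠ hs → V h < V hs := by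
    intro h hh hne
    rcases le_or_gt h 1 with h1 | h1
    · exact lt_of_le_of_lt (hmono.monotoneOn ⟨hh, h1⟩ ⟨zero_le_one, le_refl 1⟩ h1) hVs
    · rcases eq_or_lt_of_le (hglob h hh) with heq | hlt
      · exfalso
        apply hne
        have hmaxh : ∀ y ∈ Ici (0:ℝ), V y ≤ V h := fun y hy => (hglob y hy).trans heq.symm.le
        exact hcrit ⟨h1, hloc h h1 hmaxh⟩ ⟨hs1, hloc hs hs1 hglob⟩
      · exact hlt
  refine ⟨hs, ⟨hs1, hglob, hstrict⟩, ?_⟩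
  rintro y ⟨hy1, _, hystrict⟩
  by_contra hne
  have h1 := hystrict hs (le_of_lt (lt_trans zero_lt_one hs1)) (fun h => hne h.symm)
  have h2 := hstrict y (mem_Ici.mpr (le_of_lt (lt_trans zero_lt_one hy1))) hne
  linarith
end

section
/- Let r > 0, 0 < θ < π/2 with r cos θ < 1, and h > 0. Define vectors in ℝ⁴: û₀ = (0, −1, 0, 0), û₁ = (0, cos θ, −sin θ, 0), û₂ = (1/√((1 − r²cos²θ)h² + r²cos²θ))·(h r cos θ, 0, h, r cos θ), û₃ = (0, 0, 0, −1). Then ⟨ûᵢ, ûᵢ⟩_L = 1 for i = 0, 1, 2, 3; ⟨û₀, û₂⟩_L = ⟨û₀, û₃⟩_L = ⟨û₁, û₃⟩_L = 0; −⟨û₀, û₁⟩_L = cos θ; −⟨û₁, û₂⟩_L = h sin θ / √((1 − r²cos²θ)h² + r²cos²θ); and −⟨û₂, û₃⟩_L = r cos θ / √((1 − r²cos²θ)h² + r²cos²θ). -/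
open Real

/-- The Lorentzian inner product on `ℝ⁴`:
`⟨x, y⟩_L = −x₀y₀ + x₁y₁ + x₂y₂ + x₃y₃`. -/
def lorentzianInner (x y : Fin 4 → ℝ) : ℝ :=
  -(x 0 * y 0) + x 1 * y 1 + x 2 * y 2 + x 3 * y 3

theorem face_pole_vectors (r θ h : ℝ) (hr : 0 < r) (hθ0 : 0 < θ) (hθ1 : θ < π / 2)
    (hrθ : r * Real.cos θ < 1) (hh : 0 < h) :
    let u0 : Fin 4 → ℝ := ![0, -1, 0, 0]
    let u1 : Fin 4 → ℝ := ![0, Real.cos θ, -Real.sin θ, 0]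
    let u2 : Fin 4 → ℝ :=
      (1 / Real.sqrt ((1 - r ^ 2 * Real.cos θ ^ 2) * h ^ 2 + r ^ 2 * Real.cos θ ^ 2)) •
        ![h * r * Real.cos θ, 0, h, r * Real.cos θ]
    let u3 : Fin 4 → ℝ := ![0, 0, 0, -1]
    lorentzianInner u0 u0 = 1 ∧ lorentzianInner u1 u1 = 1 ∧
      lorentzianInner u2 u2 = 1 ∧ lorentzianInner u3 u3 = 1 ∧
      lorentzianInner u0 u2 = 0 ∧ lorentzianInner u0 u3 = 0 ∧
      lorentzianInner u1 u3 = 0 ∧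
      -lorentzianInner u0 u1 = Real.cos θ ∧
      -lorentzianInner u1 u2 =
        h * Real.sin θ /
          Real.sqrt ((1 - r ^ 2 * Real.cos θ ^ 2) * h ^ 2 + r ^ 2 * Real.cos θ ^ 2) ∧
      -lorentzianInner u2 u3 =
        r * Real.cos θ /
          Real.sqrt ((1 - r ^ 2 * Real.cos θ ^ 2) * h ^ 2 + r ^ 2 * Real.cos θ ^ 2) := by

  have hc : 0 < Real.cos θ := Real.cos_pos_of_mem_Ioo ⟨by linarith [Real.pi_pos], hθ1⟩
  have hrc : 0 < r * Real.cos θ := mul_pos hr hc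
  have hrc1 : r * Real.cos θ < 1 := hrθ
  have hD : 0 < (1 - r ^ 2 * Real.cos θ ^ 2) * h ^ 2 + r ^ 2 * Real.cos θ ^ 2 := by
    have h1 : r ^ 2 * Real.cos θ ^ 2 < 1 := by nlinarith
    nlinarith [sq_nonneg h, hh]
  set D := (1 - r ^ 2 * Real.cos θ ^ 2) * h ^ 2 + r ^ 2 * Real.cos θ ^ 2 with hDdef
  have hsD : 0 < Real.sqrt D := Real.sqrt_pos.mpr hD
  have hsq : Real.sqrt D * Real.sqrt D = D := Real.mul_self_sqrt hD.le
  have hsin : Real.sin θ ^ 2 + Real.cos θ ^ 2 = 1 := Real.sin_sq_add_cos_sq θ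
  intro u0 u1 u2 u3
  simp only [u0, u1, u2, u3, lorentzianInner, Pi.smul_apply, smul_eq_mul,
    Matrix.cons_val_zero, Matrix.cons_val_one, Matrix.head_cons,
    Matrix.cons_val_two, Matrix.tail_cons, Matrix.cons_val_three]
  refine ⟨by ring, by nlinarith, ?_, by ring, by ring, by ring, by ring, by nlinarith, ?_, ?_⟩
  · field_simp
    nlinarith [hsq]
  · field_simp
    ring
  · field_simp
    ring
end
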